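/- Let f : ℤ^n → ℝ ∪ {+∞} be an M-convex function with bounded dom f and R ⊆ N with ∅ ≠ R ⊊ N. Then for every integer k with k̲ ≤ k < k̄ and every x ∈ M(k), it holds that φ^R(x) = z(k+1) − z(k). -/
import Mathlib


noncomputable section

open scoped BigOperators

/-- The `i`-th unit vector in `ℤ^n`. -/
def chi {n : ℕ} (i : Fin n) : Fin n → ℤ := fun k => if k = i then 1 else 0

/-- The function never takes the value `-∞`, i.e. its codomain is `ℝ ∪ {+∞}`. -/
def NoBot {n : ℕ} (f : (Fin n → ℤ) → EReal) : Prop := ∀ x, f x ≠ ⊥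

/-- M-convexity: nonempty effective domain together with the exchange axiom (M-EXC). -/
def MConvexFn {n : ℕ} (f : (Fin n → ℤ) → EReal) : Prop :=
  (∃ x, f x ≠ ⊤) ∧
  ∀ x y : Fin n → ℤ, f x ≠ ⊤ → f y ≠ ⊤ →
    ∀ i : Fin n, y i < x i →
      ∃ j : Fin n, x j < y j ∧
        f (x - chi i + chi j) + f (y + chi i - chi j) ≤ f x + f y

/-- The slopeZ `f'(x; i, j) = f(x + χ_i - χ_j) - f(x)`. -/
def slopeZ {n : ℕ} (f : (Fin n → ℤ) → EReal) (x : Fin n → ℤ) (i j : Fin n) : EReal :=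
  f (x + chi i - chi j) - f x

/-- `φ(x) = min_{i, j ∈ N} f'(x; i, j)`. -/
def phi {n : ℕ} (f : (Fin n → ℤ) → EReal) (x : Fin n → ℤ) : EReal :=
  ⨅ i : Fin n, ⨅ j : Fin n, slopeZ f x i j

/-- Bounded effective domain. -/
def BddDom {n : ℕ} (f : (Fin n → ℤ) → EReal) : Prop :=
  ∃ C : ℤ, ∀ x : Fin n → ℤ, f x ≠ ⊤ → ∀ i, |x i| ≤ C

/-- `x(R) = Σ_{i ∈ R} x(i)`. -/
def sumR {n : ℕ} (R : Finset (Fin n)) (x : Fin n → ℤ) : ℤ := ∑ i ∈ R, x i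

/-- `k̲ = min { x(R) : x ∈ dom f }`. -/
def kmin {n : ℕ} (f : (Fin n → ℤ) → EReal) (R : Finset (Fin n)) : ℤ :=
  sInf {r : ℤ | ∃ x, f x ≠ ⊤ ∧ sumR R x = r}

/-- `k̄ = max { x(R) : x ∈ dom f }`. -/
def kmax {n : ℕ} (f : (Fin n → ℤ) → EReal) (R : Finset (Fin n)) : ℤ :=
  sSup {r : ℤ | ∃ x, f x ≠ ⊤ ∧ sumR R x = r}

/-- `M(k)`: the set of minimizers of `f` over `{x ∈ dom f : x(R) = k}`. -/
def Mset {n : ℕ} (f : (Fin n → ℤ) → EReal) (R : Finset (Fin n)) (k : ℤ) :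
    Set (Fin n → ℤ) :=
  {x | f x ≠ ⊤ ∧ sumR R x = k ∧ ∀ y : Fin n → ℤ, f y ≠ ⊤ → sumR R y = k → f x ≤ f y}

/-- `z(k) = min { f(x) : x ∈ dom f, x(R) = k }`. -/
def zval {n : ℕ} (f : (Fin n → ℤ) → EReal) (R : Finset (Fin n)) (k : ℤ) : EReal :=
  ⨅ (x : Fin n → ℤ) (_ : f x ≠ ⊤ ∧ sumR R x = k), f x

/-- `φ^R(x) = min { f'(x; i, j) : i ∈ R, j ∈ N ∖ R }`. -/
def phiR {n : ℕ} (f : (Fin n → ℤ) → EReal) (R : Finset (Fin n)) (x : Fin n → ℤ) : EReal :=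
  ⨅ i ∈ R, ⨅ j ∈ Rᶜ, slopeZ f x i j

/-- For `k̲ ≤ k < k̄` and `x ∈ M(k)`, the steepest `R`-slopeZ at `x` equals the
increment of the optimal value function: `φ^R(x) = z(k+1) - z(k)`. -/


lemma sumR_chi {n : ℕ} (R : Finset (Fin n)) (i : Fin n) :
    sumR R (chi i) = if i ∈ R then 1 else 0 := by
  simp [sumR, chi]

lemma sumR_addsub {n : ℕ} (R : Finset (Fin n)) (y : Fin n → ℤ) (i j : Fin n) :
    sumR R (y + chi i - chi j)
      = sumR R y + (if i ∈ R then 1 else 0) - (if j ∈ R then 1 else 0) := by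
  simp [sumR, Finset.sum_sub_distrib, Finset.sum_add_distrib, ← sumR_chi, sumR]

lemma sumR_subadd {n : ℕ} (R : Finset (Fin n)) (y : Fin n → ℤ) (i j : Fin n) :
    sumR R (y - chi i + chi j)
      = sumR R y - (if i ∈ R then 1 else 0) + (if j ∈ R then 1 else 0) := by
  simp [sumR, Finset.sum_sub_distrib, Finset.sum_add_distrib, ← sumR_chi, sumR]

lemma pifin {n : ℕ} (C : ℤ) : (Set.Icc (fun _ => -C) (fun _ => C) : Set (Fin n → ℤ)).Finite :=
  Set.finite_Icc _ _

lemma exists_gt' {n : ℕ} (R : Finset (Fin n)) {x y : Fin n → ℤ} (h : sumR R x < sumR R y) :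
    ∃ i ∈ R, x i < y i := by
  by_contra hc
  push_neg at hc
  exact absurd (Finset.sum_le_sum hc) (not_le.mpr h)

lemma measure_step {n : ℕ} (x y : Fin n → ℤ) (i j : Fin n) (hi : x i < y i) (hj : y j < x j) :
    (∑ k, max ((y - chi i + chi j) k - x k) 0) = (∑ k, max (y k - x k) 0) - 1 := by
  have hij : i ≠ j := by intro h; subst h; omega
  have hpt : ∀ k, (y - chi i + chi j) k
      = y k - (if k = i then 1 else 0) + (if k = j then 1 else 0) := by
    intro k; simp [chi]
  have key : ∀ k : Fin n, max (y k - x k) 0 - max ((y - chi i + chi j) k - x k) 0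
      = if k = i then 1 else 0 := by
    intro k
    rw [hpt k]
    by_cases h1 : k = i
    · subst h1
      rw [if_neg hij]
      have e1 : max (y k - x k) 0 = y k - x k := max_eq_left (by omega)
      have e2 : max (y k - (1:ℤ) + 0 - x k) 0 = y k - 1 + 0 - x k := max_eq_left (by omega)
      simp only [if_pos rfl, e1, e2]
      omega
    · rw [if_neg h1]
      by_cases h2 : k = j
      · subst h2
        simp only [if_neg h1, eq_self_iff_true, if_true]
        rw [max_eq_right (by omega : y k - (0:ℤ) + 1 - x k ≤ 0),
          max_eq_right (by omega : y k - x k ≤ 0)]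
        norm_num
      · simp only [if_neg h1, if_neg h2]
        omega
  have := Finset.sum_congr rfl (fun k (_ : k ∈ Finset.univ) => key k)
  rw [Finset.sum_sub_distrib] at this
  simp only [Finset.sum_ite_eq' Finset.univ i (fun _ => (1:ℤ)), Finset.mem_univ, if_pos] at this
  omega

lemma measure_nonneg {n : ℕ} (x y : Fin n → ℤ) : (0:ℤ) ≤ ∑ k, max (y k - x k) 0 :=
  Finset.sum_nonneg (fun _ _ => le_max_right _ _)

lemma measure_pos {n : ℕ} (x y : Fin n → ℤ) (i : Fin n) (hi : x i < y i) :
    (1:ℤ) ≤ ∑ k, max (y k - x k) 0 := by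
  have h1 : (1:ℤ) ≤ max (y i - x i) 0 := le_max_of_le_left (by omega)
  calc (1:ℤ) ≤ max (y i - x i) 0 := h1
    _ ≤ ∑ k, max (y k - x k) 0 :=
      Finset.single_le_sum (f := fun k => max (y k - x k) 0)
        (fun k _ => le_max_right _ _) (Finset.mem_univ i)

lemma toR {e : EReal} (h1 : e ≠ ⊤) (h2 : e ≠ ⊥) : ∃ r : ℝ, e = (r : EReal) :=
  ⟨e.toReal, (EReal.coe_toReal h1 h2).symm⟩

lemma ne_top_left_of_add_le_coe {a b : EReal} (hb : b ≠ ⊥) {r : ℝ} (h : a + b ≤ (r : EReal)) :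
    a ≠ ⊤ := by
  intro ha
  rw [ha, EReal.top_add_of_ne_bot hb] at h
  exact (EReal.coe_ne_top r) (top_le_iff.mp h)

lemma ne_top_right_of_add_le_coe {a b : EReal} (ha : a ≠ ⊥) {r : ℝ} (h : a + b ≤ (r : EReal)) :
    b ≠ ⊤ := by
  rw [add_comm] at h
  exact ne_top_left_of_add_le_coe ha h

lemma zval_le {n : ℕ} (f : (Fin n → ℤ) → EReal) (R : Finset (Fin n)) (m : ℤ)
    {v : Fin n → ℤ} (hv : f v ≠ ⊤) (hs : sumR R v = m) : zval f R m ≤ f v := by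
  unfold zval
  exact iInf₂_le v ⟨hv, hs⟩

/-- Reachability: from any point of the domain with larger `R`-sum, a point with
`R`-sum exactly `sumR R x + 1` exists in the domain. -/
lemma reach {n : ℕ} (f : (Fin n → ℤ) → EReal) (hbot : NoBot f) (hM : MConvexFn f)
    (R : Finset (Fin n)) (x : Fin n → ℤ) (hx : f x ≠ ⊤) :
    ∀ d : ℕ, ∀ w : Fin n → ℤ, f w ≠ ⊤ → sumR R x < sumR R w →
      (∑ k, max (w k - x k) 0).toNat ≤ d →
      ∃ v, f v ≠ ⊤ ∧ sumR R v = sumR R x + 1 := by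
  intro d
  induction d with
  | zero =>
    intro w hw hgt hd
    obtain ⟨i, _, hi⟩ := exists_gt' R hgt
    have := measure_pos x w i hi
    omega
  | succ d ih =>
    intro w hw hgt hd
    by_cases heq : sumR R w = sumR R x + 1
    · exact ⟨w, hw, heq⟩
    obtain ⟨i, hiR, hi⟩ := exists_gt' R hgt
    obtain ⟨j, hj, hkey⟩ := hM.2 w x hw hx i hi
    obtain ⟨rw', hrw⟩ := toR hw (hbot w)
    obtain ⟨rx, hrx⟩ := toR hx (hbot x)
    rw [hrw, hrx, ← EReal.coe_add] at hkey
    have hw' : f (w - chi i + chi j) ≠ ⊤ := ne_top_left_of_add_le_coe (hbot _) hkey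
    refine ih (w - chi i + chi j) hw' ?_ ?_
    · rw [sumR_subadd, if_pos hiR]
      by_cases hjR : j ∈ R
      · rw [if_pos hjR]; omega
      · rw [if_neg hjR]; omega
    · have hm := measure_step x w i j hi hj
      have h0 := measure_nonneg x (w - chi i + chi j)
      omega

/-- Steepest descent: starting from a minimizer at level `k+1`, exchange steps
produce a direct step from `x`. -/
lemma descent {n : ℕ} (f : (Fin n → ℤ) → EReal) (hbot : NoBot f) (hM : MConvexFn f)
    (R : Finset (Fin n)) (k : ℤ) (x : Fin n → ℤ) (hx1 : f x ≠ ⊤) (hx2 : sumR R x = k)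
    (hx3 : ∀ y : Fin n → ℤ, f y ≠ ⊤ → sumR R y = k → f x ≤ f y) :
    ∀ d : ℕ, ∀ y : Fin n → ℤ, f y ≠ ⊤ → sumR R y = k + 1 → f y ≤ zval f R (k + 1) →
      (∑ t, max (y t - x t) 0).toNat ≤ d →
      ∃ i ∈ R, ∃ j, j ∉ R ∧ f (x + chi i - chi j) ≤ zval f R (k + 1) := by
  intro d
  induction d with
  | zero =>
    intro y hy hsy _ hd
    obtain ⟨i, _, hi⟩ := exists_gt' R (by omega : sumR R x < sumR R y)
    have := measure_pos x y i hi
    omega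
  | succ d ih =>
    intro y hy hsy hymin hd
    obtain ⟨i, hiR, hi⟩ := exists_gt' R (by omega : sumR R x < sumR R y)
    obtain ⟨j, hj, hkey⟩ := hM.2 y x hy hx1 i hi
    obtain ⟨ry, hry⟩ := toR hy (hbot y)
    obtain ⟨rx, hrx⟩ := toR hx1 (hbot x)
    rw [hry, hrx, ← EReal.coe_add] at hkey
    have hy' : f (y - chi i + chi j) ≠ ⊤ := ne_top_left_of_add_le_coe (hbot _) hkey
    have hx' : f (x + chi i - chi j) ≠ ⊤ := ne_top_right_of_add_le_coe (hbot _) hkey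
    obtain ⟨ry', hry'⟩ := toR hy' (hbot _)
    obtain ⟨rx', hrx'⟩ := toR hx' (hbot _)
    rw [hry', hrx', ← EReal.coe_add, EReal.coe_le_coe_iff] at hkey
    by_cases hjR : j ∈ R
    · -- recurse with y' := y - chi i + chi j
      have hsy' : sumR R (y - chi i + chi j) = k + 1 := by
        rw [sumR_subadd, if_pos hiR, if_pos hjR]; omega
      have hsx' : sumR R (x + chi i - chi j) = k := by
        rw [sumR_addsub, if_pos hiR, if_pos hjR]; omega
      have hxle : rx ≤ rx' := by
        have := hx3 (x + chi i - chi j) hx' hsx'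
        rw [hrx, hrx', EReal.coe_le_coe_iff] at this
        exact this
      have hyle : f (y - chi i + chi j) ≤ zval f R (k + 1) := by
        refine le_trans ?_ hymin
        rw [hry', hry, EReal.coe_le_coe_iff]
        linarith
      refine ih (y - chi i + chi j) hy' hsy' hyle ?_
      have hm := measure_step x y i j hi hj
      have h0 := measure_nonneg x (y - chi i + chi j)
      omega
    · -- done: x + chi i - chi j works
      have hsy' : sumR R (y - chi i + chi j) = k := by
        rw [sumR_subadd, if_pos hiR, if_neg hjR]; omega
      have hxle : rx ≤ ry' := by
        have := hx3 (y - chi i + chi j) hy' hsy'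
        rw [hrx, hry', EReal.coe_le_coe_iff] at this
        exact this
      refine ⟨i, hiR, j, hjR, le_trans ?_ hymin⟩
      rw [hrx', hry, EReal.coe_le_coe_iff]
      linarith

theorem statement9 {n : ℕ} (hn : 1 ≤ n) (f : (Fin n → ℤ) → EReal)
    (hbot : NoBot f) (hM : MConvexFn f) (hbdd : BddDom f)
    (R : Finset (Fin n)) (hR : R.Nonempty) (hRp : R ≠ Finset.univ)
    (k : ℤ) (hk1 : kmin f R ≤ k) (hk2 : k < kmax f R)
    (x : Fin n → ℤ) (hx : x ∈ Mset f R k) :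
    phiR f R x = zval f R (k + 1) - zval f R k := by
  obtain ⟨hx1, hx2, hx3⟩ := hx
  obtain ⟨C, hC⟩ := hbdd
  -- the supremum of attained R-sums is attained
  have hSne : {r : ℤ | ∃ v, f v ≠ ⊤ ∧ sumR R v = r}.Nonempty := ⟨k, x, hx1, hx2⟩
  have hSbdd : BddAbove {r : ℤ | ∃ v, f v ≠ ⊤ ∧ sumR R v = r} := by
    refine ⟨(R.card : ℤ) * C, ?_⟩
    rintro r ⟨v, hv, rfl⟩
    calc sumR R v ≤ ∑ _i ∈ R, C := Finset.sum_le_sum (fun i _ => (abs_le.mp (hC v hv i)).2)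
      _ = (R.card : ℤ) * C := by rw [Finset.sum_const, nsmul_eq_mul]
  obtain ⟨w, hw, hsw⟩ : ∃ w, f w ≠ ⊤ ∧ sumR R w = kmax f R := Int.csSup_mem hSne hSbdd
  -- a point of the domain at level k+1
  have hgt : sumR R x < sumR R w := by rw [hx2, hsw]; exact hk2
  obtain ⟨v, hv, hsv⟩ := reach f hbot hM R x hx1 (∑ t, max (w t - x t) 0).toNat w hw hgt le_rfl
  rw [hx2] at hsv
  -- a minimizer at level k+1
  have hDfin : {u : Fin n → ℤ | f u ≠ ⊤}.Finite := by
    apply Set.Finite.subset (Set.finite_Icc (fun _ => -C) (fun _ => C))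
    intro u hu
    simp only [Set.mem_Icc, Pi.le_def]
    exact ⟨fun i => (abs_le.mp (hC u hu i)).1, fun i => (abs_le.mp (hC u hu i)).2⟩
  have hTfin : {u : Fin n → ℤ | f u ≠ ⊤ ∧ sumR R u = k + 1}.Finite :=
    hDfin.subset (fun u hu => hu.1)
  obtain ⟨y, hyT, hymin⟩ := Set.exists_min_image _ f hTfin ⟨v, hv, hsv⟩
  have hz1 : zval f R (k + 1) = f y := by
    refine le_antisymm (zval_le f R _ hyT.1 hyT.2) ?_
    unfold zval
    exact le_iInf fun b => le_iInf fun hb => hymin b hb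
  have hz0 : zval f R k = f x := by
    refine le_antisymm (zval_le f R _ hx1 hx2) ?_
    unfold zval
    exact le_iInf fun b => le_iInf fun hb => hx3 b hb.1 hb.2
  obtain ⟨i, hiR, j, hjR, hstep⟩ := descent f hbot hM R k x hx1 hx2 hx3
    (∑ t, max (y t - x t) 0).toNat y hyT.1 hyT.2 hz1.ge le_rfl
  obtain ⟨rx, hrx⟩ := toR hx1 (hbot x)
  refine le_antisymm ?_ ?_
  · have h1 : phiR f R x ≤ slopeZ f x i j := by
      unfold phiR
      exact iInf₂_le_of_le i hiR (iInf₂_le j (Finset.mem_compl.mpr hjR))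
    refine h1.trans ?_
    unfold slopeZ
    rw [hz0]
    exact EReal.sub_le_sub hstep le_rfl
  · unfold phiR
    refine le_iInf₂ fun i' hi' => le_iInf₂ fun j' hj' => ?_
    unfold slopeZ
    by_cases htop : f (x + chi i' - chi j') = ⊤
    · rw [htop, hz0, hrx, EReal.top_sub_coe]
      exact le_top
    · have hs' : sumR R (x + chi i' - chi j') = k + 1 := by
        rw [sumR_addsub, if_pos hi', if_neg (Finset.mem_compl.mp hj'), hx2]
        omega
      rw [hz0]
      exact EReal.sub_le_sub (zval_le f R _ htop hs') le_rfl
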